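/- Let k be a commutative ring, A a k-algebra, and I = ⟨Q | R⟩ a small category presented by a quiver with relations. Then Gr(Δ(A)) ≅ A ⊗_k (kQ/⟨R⟩_k), i.e., the Grothendieck construction of the diagonal functor at A is isomorphic to the tensor product over k of A with the k-linear category kQ modulo the ideal generated by g − h for (g,h) ∈ R. -/

import Mathlib

open CategoryTheory Quiver Finsupp TensorProduct

/-- Convolution composition in the path `k`-category `kQ`. -/
noncomputable def pcomp {V : Type} [Quiver.{1} V] {A : Type*} [Ring A] {i j l : V}
    (f : Path i j →₀ A) (g : Path j l →₀ A) : Path i l →₀ A :=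
  f.sum fun p fp => g.sum fun q gq => Finsupp.single (p.comp q) (gq * fp)

/-- The relation `R` viewed as a `HomRel` on the free category `ℙQ = Paths V`. -/
def pathsRel {V : Type} [Quiver.{1} V]
    (R : ∀ ⦃i j : V⦄, Path i j → Path i j → Prop) : HomRel (Paths V) :=
  fun {_ _} p q => R p q

/-- The category `I = ⟨Q ∣ R⟩`. -/
def PresCat {V : Type} [Quiver.{1} V]
    (R : ∀ ⦃i j : V⦄, Path i j → Path i j → Prop) : Type :=
  CategoryTheory.Quotient (pathsRel R)

noncomputable instance {V : Type} [Quiver.{1} V]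
    (R : ∀ ⦃i j : V⦄, Path i j → Path i j → Prop) : Category (PresCat R) :=
  inferInstanceAs (Category (CategoryTheory.Quotient (pathsRel R)))

/-- The object of `I = ⟨Q ∣ R⟩` corresponding to a vertex `i`. -/
def presObj {V : Type} [Quiver.{1} V]
    (R : ∀ ⦃i j : V⦄, Path i j → Path i j → Prop) (i : V) : PresCat R :=
  ⟨i⟩

/-- Composition in the Grothendieck construction `Gr(Δ(A))`. -/
noncomputable def gconv {C : Type*} [Category C] {A : Type*} [Ring A] {X Y Z : C}
    (f : (X ⟶ Y) →₀ A) (g : (Y ⟶ Z) →₀ A) : (X ⟶ Z) →₀ A :=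
  f.sum fun a fa => g.sum fun b gb => Finsupp.single (a ≫ b) (gb * fa)

/-- The component at `(i,j)` of the ideal `⟨R⟩_k` of the path `k`-category `kQ`
generated by the `g - h` with `(g,h) ∈ R`. -/
noncomputable def Idk (k : Type*) [CommRing k] {V : Type} [Quiver.{1} V]
    (R : ∀ ⦃i j : V⦄, Path i j → Path i j → Prop) (i j : V) :
    Submodule k (Path i j →₀ k) :=
  Submodule.span k
    {f : Path i j →₀ k | ∃ (i' j' : V) (x y : k)
      (α : Path i i') (p q : Path i' j') (β : Path j' j), R p q ∧
      f = pcomp (Finsupp.single α x)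
            (pcomp (Finsupp.single p (1 : k) - Finsupp.single q (1 : k))
              (Finsupp.single β y))}

section Aux

variable {k : Type*} [CommRing k] {V : Type} [Quiver.{1} V]
  (R : ∀ ⦃i j : V⦄, Path i j → Path i j → Prop) {i j l : V}

lemma pcomp_single_single (α : Path i j) (x : k) (β : Path j l) (y : k) :
    pcomp (Finsupp.single α x) (Finsupp.single β y)
      = Finsupp.single (α.comp β) (y * x) := by
  simp [pcomp, Finsupp.sum_single_index]

lemma pcomp_sub_left (f f' : Path i j →₀ k) (g : Path j l →₀ k) :
    pcomp (f - f') g = pcomp f g - pcomp f' g := by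
  unfold pcomp
  rw [Finsupp.sum_sub_index]
  intro p b₁ b₂
  rw [← Finsupp.sum_sub]
  congr 1; ext q c
  rw [mul_sub, Finsupp.single_sub]

lemma pcomp_sub_right (f : Path i j →₀ k) (g g' : Path j l →₀ k) :
    pcomp f (g - g') = pcomp f g - pcomp f g' := by
  unfold pcomp
  rw [← Finsupp.sum_sub]
  congr 1; ext p c
  rw [Finsupp.sum_sub_index]
  intro q b₁ b₂
  rw [sub_mul, Finsupp.single_sub]

lemma gen_eq (α : Path i j) (x : k) {j' : V} (p q : Path j j') (β : Path j' l) (y : k) :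
    pcomp (Finsupp.single α x)
        (pcomp (Finsupp.single p (1 : k) - Finsupp.single q (1 : k))
          (Finsupp.single β y))
      = Finsupp.single (α.comp (p.comp β)) (y * x)
        - Finsupp.single (α.comp (q.comp β)) (y * x) := by
  rw [pcomp_sub_left, pcomp_single_single, pcomp_single_single, pcomp_sub_right,
    pcomp_single_single, pcomp_single_single]
  simp [mul_one]

/-- Path to hom in the presented category. -/
def toHom (p : Path i j) : (presObj R i ⟶ presObj R j) := Quot.mk _ p

lemma sub_mem_Idk {p q : Path i j}
    (h : HomRel.CompClosure (pathsRel R) p q) :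
    Finsupp.single p (1 : k) - Finsupp.single q (1 : k) ∈ Idk k R i j := by
  obtain ⟨_, _, f, m₁, m₂, g, hr⟩ := h
  apply Submodule.subset_span
  refine ⟨_, _, 1, 1, f, m₁, m₂, g, hr, ?_⟩
  refine Eq.trans ?_ (gen_eq (k := k) f 1 m₁ m₂ g 1).symm
  simp only [mul_one]
  rfl

/-- The forward map. -/
noncomputable def phi (i j : V) :
    (Path i j →₀ k) →ₗ[k] ((presObj R i ⟶ presObj R j) →₀ k) :=
  Finsupp.lmapDomain k k (toHom R)

lemma phi_single (p : Path i j) (x : k) :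
    phi R i j (Finsupp.single p x) = Finsupp.single (toHom R p) x :=
  Finsupp.mapDomain_single

lemma Idk_le_ker : Idk k R i j ≤ LinearMap.ker (phi R i j) := by
  rw [Idk, Submodule.span_le]
  rintro _ ⟨i', j', x, y, α, p, q, β, hr, rfl⟩
  simp only [SetLike.mem_coe, LinearMap.mem_ker, gen_eq, map_sub, phi_single]
  have : toHom R (α.comp (p.comp β)) = toHom R (α.comp (q.comp β)) :=
    Quot.sound (HomRel.CompClosure.intro (C := Paths V)
      (r := pathsRel R) _ _ α p q β hr)
  rw [this, sub_self]

/-- The backward map on basis elements. -/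
noncomputable def psiFun (c : presObj R i ⟶ presObj R j) :
    (Path i j →₀ k) ⧸ Idk k R i j :=
  Quot.lift (fun p : Path i j => Submodule.Quotient.mk (Finsupp.single p (1 : k)))
    (fun p q h => by
      rw [Submodule.Quotient.eq]
      exact sub_mem_Idk R h) c

noncomputable def psi (i j : V) :
    ((presObj R i ⟶ presObj R j) →₀ k) →ₗ[k] ((Path i j →₀ k) ⧸ Idk k R i j) :=
  Finsupp.linearCombination k (psiFun R)

lemma psi_single_mk (p : Path i j) (x : k) :
    psi R i j (Finsupp.single (toHom R p) x)
      = Submodule.Quotient.mk (Finsupp.single p x) := by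
  rw [psi, Finsupp.linearCombination_single]
  show x • Submodule.Quotient.mk _ = _
  rw [← Submodule.Quotient.mk_smul, Finsupp.smul_single', mul_one]

/-- The equivalence on the path-module level. -/
noncomputable def eQ (i j : V) :
    ((Path i j →₀ k) ⧸ Idk k R i j) ≃ₗ[k] ((presObj R i ⟶ presObj R j) →₀ k) :=
  LinearEquiv.ofLinear ((Idk k R i j).liftQ (phi R i j) (Idk_le_ker R)) (psi R i j)
    (by
      apply Finsupp.lhom_ext
      intro c x
      induction c using Quot.ind with
      | mk p =>
        change Path i j at p
        show (Idk k R i j).liftQ (phi R i j) (Idk_le_ker R)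
            (psi R i j (Finsupp.single (toHom R p) x)) = _
        rw [psi_single_mk, Submodule.liftQ_apply, phi_single]
        rfl)
    (by
      refine Submodule.linearMap_qext _ ?_
      apply Finsupp.lhom_ext
      intro p x
      show psi R i j ((Idk k R i j).liftQ (phi R i j) (Idk_le_ker R)
          (Submodule.Quotient.mk (Finsupp.single p x))) = _
      rw [Submodule.liftQ_apply, phi_single, psi_single_mk]
      rfl)

end Aux

section Aux2

variable {k : Type*} [CommRing k] {V : Type} [Quiver.{1} V]
  (R : ∀ ⦃i j : V⦄, Path i j → Path i j → Prop)
  {A : Type*} [Ring A] [Algebra k A]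

noncomputable local instance (priority := high) decEqHack {α : Type*} : DecidableEq α :=
  Classical.decEq _

lemma eQ_mk_single {i j : V} (p : Path i j) (x : k) :
    eQ R i j (Submodule.Quotient.mk (Finsupp.single p x)) = Finsupp.single (toHom R p) x := by
  show (Idk k R i j).liftQ (phi R i j) (Idk_le_ker R)
      (Submodule.Quotient.mk (Finsupp.single p x)) = _
  rw [Submodule.liftQ_apply, phi_single]

/-- The full equivalence. -/
noncomputable def eFull (i j : V) :
    (A ⊗[k] ((Path i j →₀ k) ⧸ Idk k R i j)) ≃ₗ[k]
      ((presObj R i ⟶ presObj R j) →₀ A) :=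
  (TensorProduct.congr (LinearEquiv.refl k A) (eQ R i j)).trans
    (TensorProduct.finsuppScalarRight k k A _)

lemma eFull_tmul_single (i j : V) (a : A) (p : Path i j) (x : k) :
    eFull R i j (a ⊗ₜ[k] Submodule.Quotient.mk (Finsupp.single p x))
      = Finsupp.single (toHom R p) (x • a) := by
  rw [eFull, LinearEquiv.trans_apply, TensorProduct.congr_tmul, LinearEquiv.refl_apply,
    eQ_mk_single, TensorProduct.finsuppScalarRight_apply_tmul,
    Finsupp.sum_single_index (by rw [zero_smul, Finsupp.single_zero])]

lemma gconv_single_single {C : Type*} [Category C] {X Y Z : C} (f : X ⟶ Y) (g : Y ⟶ Z)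
    (x y : A) : gconv (Finsupp.single f x) (Finsupp.single g y)
      = Finsupp.single (f ≫ g) (y * x) := by
  simp [gconv, Finsupp.sum_single_index]

end Aux2

/-- `Gr(Δ(A)) ≅ A ⊗_k (kQ/⟨R⟩_k)`: there is a family of `k`-linear
equivalences on hom-modules, preserving identities and composition (composition on
the tensor side is induced by multiplication in `A` and concatenation of paths). -/
theorem stmt11 (k : Type*) [CommRing k] (A : Type*) [Ring A] [Algebra k A]
    (V : Type) [Quiver.{1} V] (R : ∀ ⦃i j : V⦄, Path i j → Path i j → Prop) :
    ∃ e : ∀ i j : V,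
        (A ⊗[k] ((Path i j →₀ k) ⧸ Idk k R i j)) ≃ₗ[k]
          ((presObj R i ⟶ presObj R j) →₀ A),
      (∀ i : V,
        e i i ((1 : A) ⊗ₜ[k]
            Submodule.Quotient.mk (Finsupp.single Path.nil (1 : k)))
          = Finsupp.single (𝟙 (presObj R i)) (1 : A)) ∧
      (∀ (i j l : V) (x y : A) (p : Path i j) (q : Path j l),
        e i l ((y * x) ⊗ₜ[k]
            Submodule.Quotient.mk (Finsupp.single (p.comp q) (1 : k)))
          = gconv (e i j (x ⊗ₜ[k] Submodule.Quotient.mk (Finsupp.single p (1 : k))))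
              (e j l (y ⊗ₜ[k] Submodule.Quotient.mk (Finsupp.single q (1 : k))))) := by
  refine ⟨fun i j => eFull R i j, fun i => ?_, fun i j l x y p q => ?_⟩
  · rw [eFull_tmul_single, one_smul]
    rfl
  · rw [eFull_tmul_single, eFull_tmul_single, eFull_tmul_single, one_smul, one_smul, one_smul,
      gconv_single_single]
    rfl
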